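/- If f: M → M' is an isogeny of pure A-motives over a field L (injective with torsion cokernel, compatible with τ), then there exists a nonzero a ∈ A (not merely in A_L = A⊗_{F_q}L) annihilating coker f, and consequently a dual isogeny f^∨: M' → M with f ∘ f^∨ = a·id and f^∨ ∘ f = a·id. -/

import Mathlib

open Polynomial

theorem aux_nzsd {R : Type*} [CommRing R] [IsDomain R] {P : Type*} [AddCommGroup P] [Module R P]
    (hP : Module.Projective R P) : NoZeroSMulDivisors R P := by
  obtain ⟨s, hs⟩ := Module.projective_def.mp hP
  constructor
  intro c x h
  by_cases hc : c = 0
  · exact Or.inl hc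
  · right
    have h2 : s (c • x) = 0 := by rw [h, map_zero]
    have h3 : s x = 0 := by
      ext i
      have := congrArg (fun v => v i) h2
      simp only [map_smul, Finsupp.smul_apply, smul_eq_mul, Finsupp.coe_zero, Pi.zero_apply] at this
      rcases mul_eq_zero.mp this with h | h
      · exact absurd h hc
      · exact h
    have := hs x
    rw [h3, map_zero] at this
    exact this.symm

theorem key {L : Type} [Field L] (frob : L →+* L) (θ : L)
    {M M' : Type} [AddCommGroup M] [Module (Polynomial L) M]
    [AddCommGroup M'] [Module (Polynomial L) M']
    [Module.Finite (Polynomial L) M] [Module.Projective (Polynomial L) M]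
    [Module.Projective (Polynomial L) M']
    (τ : M → M) (τ' : M' → M')
    (hτadd : ∀ x y, τ (x + y) = τ x + τ y)
    (hτsl : ∀ (p : Polynomial L) (x : M), τ (p • x) = (p.map frob) • τ x)
    (hτ'sl : ∀ (p : Polynomial L) (y : M'), τ' (p • y) = (p.map frob) • τ' y)
    {dM : ℕ} (hJ : ∀ x : M, ((X - C θ) ^ dM : Polynomial L) • x ∈
      Submodule.span (Polynomial L) (Set.range τ))
    (f : M →ₗ[Polynomial L] M') (hfinj : Function.Injective f)
    (hcompat : ∀ x : M, f (τ x) = τ' (f x))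
    (c : L) (hc : frob c ≠ θ)
    (y : M') (h1 : (X - C c) • y ∈ LinearMap.range f)
    (h2 : τ' y ∈ LinearMap.range f) : y ∈ LinearMap.range f := by
  haveI : NoZeroSMulDivisors (Polynomial L) M := aux_nzsd ‹_›
  haveI : NoZeroSMulDivisors (Polynomial L) M' := aux_nzsd ‹_›
  haveI : Module.Free (Polynomial L) M := Module.free_of_finite_type_torsion_free'
  obtain ⟨z, hz⟩ := h1
  obtain ⟨x, hx⟩ := h2
  set c' : L := frob c with hc'
  -- (X - C c') • x = τ z
  have step1 : (X - C c') • x = τ z := by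
    apply hfinj
    have e1 : f ((X - C c') • x) = (X - C c') • τ' y := by rw [map_smul, hx]
    have e2 : f (τ z) = (X - C c') • τ' y := by
      rw [hcompat z, hz, hτ'sl]
      congr 1
      simp [hc']
    rw [e1, e2]
  -- basis machinery
  set ι := Module.Free.ChooseBasisIndex (Polynomial L) M with hι
  set bb : Module.Basis ι (Polynomial L) M := Module.Free.chooseBasis (Polynomial L) M with hbb
  set E : L → M → (ι → L) := fun c0 v i => ((bb.repr v) i).eval c0 with hE
  have E_add : ∀ c0 u v, E c0 (u + v) = E c0 u + E c0 v := by
    intro c0 u v; funext i; simp [hE]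
  have E_zero : ∀ c0, E c0 0 = 0 := by intro c0; funext i; simp [hE]
  have E_smul : ∀ c0 (p : Polynomial L) v, E c0 (p • v) = p.eval c0 • E c0 v := by
    intro c0 p v; funext i; simp [hE, mul_comm]
  have E_surj : ∀ (c0 : L) (w : ι → L), ∃ v, E c0 v = w := by
    intro c0 w
    refine ⟨∑ i, (C (w i) : Polynomial L) • bb i, ?_⟩
    funext j
    simp only [hE, map_sum, map_smul]
    rw [Finset.sum_apply']
    simp [Module.Basis.repr_self, Finsupp.single_apply]
  have E_ker : ∀ (c0 : L) v, E c0 v = 0 → ∃ v', v = (X - C c0) • v' := by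
    intro c0 v hv
    refine ⟨∑ i, ((bb.repr v i) /ₘ (X - C c0)) • bb i, ?_⟩
    have : ∀ i : ι, (X - C c0) * ((bb.repr v i) /ₘ (X - C c0)) = bb.repr v i := by
      intro i
      have hroot : (bb.repr v i) %ₘ (X - C c0) = 0 := by
        rw [modByMonic_X_sub_C_eq_C_eval]
        have : ((bb.repr v) i).eval c0 = 0 := congrFun hv i
        rw [this, map_zero]
      have := modByMonic_add_div (bb.repr v i) (X - C c0)
      rw [hroot, zero_add] at this
      exact this
    calc v = ∑ i, bb.repr v i • bb i := (bb.sum_repr v).symm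
      _ = (X - C c0) • ∑ i, ((bb.repr v i) /ₘ (X - C c0)) • bb i := by
          rw [Finset.smul_sum]
          refine Finset.sum_congr rfl fun i _ => ?_
          rw [smul_smul, this i]
  let τA : M →+ M := AddMonoidHom.mk' τ hτadd
  let EA : (c0 : L) → M →+ (ι → L) := fun c0 => AddMonoidHom.mk' (E c0) (E_add c0)
  set t : ι → (ι → L) := fun i => E c' (τ (bb i)) with ht
  have E_tau : ∀ v, E c' (τ v) = ∑ i, frob (E c v i) • t i := by
    intro v
    conv_lhs => rw [← bb.sum_repr v]
    rw [show τ (∑ i, bb.repr v i • bb i) = ∑ i, τ (bb.repr v i • bb i) from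
      map_sum τA _ _]
    rw [show E c' (∑ i, τ (bb.repr v i • bb i)) = ∑ i, E c' (τ (bb.repr v i • bb i)) from
      map_sum (EA c') _ _]
    refine Finset.sum_congr rfl fun i _ => ?_
    rw [hτsl, E_smul]
    congr 1
    rw [eval_map, hc', eval₂_hom]
  have hspan : ⊤ ≤ Submodule.span L (Set.range t) := by
    intro w _
    set α : L := (c' - θ) ^ dM with hα
    have hα0 : α ≠ 0 := pow_ne_zero _ (sub_ne_zero.mpr hc)
    obtain ⟨v₀, hv₀⟩ := E_surj c' (α⁻¹ • w)
    have hsub : ∀ u ∈ Submodule.span (Polynomial L) (Set.range τ),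
        E c' u ∈ Submodule.span L (Set.range t) := by
      intro u hu
      induction hu using Submodule.span_induction with
      | mem v hv =>
          obtain ⟨u0, rfl⟩ := hv
          rw [E_tau u0]
          exact Submodule.sum_mem _ fun i _ =>
            Submodule.smul_mem _ _ (Submodule.subset_span ⟨i, rfl⟩)
      | zero => rw [E_zero]; exact Submodule.zero_mem _
      | add v₁ v₂ _ _ h₁ h₂ => rw [E_add]; exact Submodule.add_mem _ h₁ h₂
      | smul p v _ hv => rw [E_smul]; exact Submodule.smul_mem _ _ hv
    have h1 := hsub _ (hJ v₀)
    have h2 : E c' ((X - C θ) ^ dM • v₀) = w := by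
      rw [E_smul, hv₀, smul_smul]
      have : ((X - C θ : Polynomial L) ^ dM).eval c' = α := by simp [hα]
      rw [this, mul_inv_cancel₀ hα0, one_smul]
    rwa [h2] at h1
  have hcard : Fintype.card ι = Module.finrank L (ι → L) := (Module.finrank_pi L).symm
  have hind := linearIndependent_of_top_le_span_of_card_eq_finrank hspan hcard
  have hEz : ∑ i, frob (E c z i) • t i = 0 := by
    rw [← E_tau z, ← step1, E_smul]
    have : (X - C c' : Polynomial L).eval c' = 0 := by simp
    rw [this, zero_smul]
  have hzero : ∀ i, frob (E c z i) = 0 := Fintype.linearIndependent_iff.mp hind _ hEz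
  have hEz0 : E c z = 0 := funext fun i => frob.injective (by rw [hzero i]; simp)
  obtain ⟨z', hz'⟩ := E_ker c z hEz0
  refine ⟨z', ?_⟩
  have hcc : (X - C c) • f z' = (X - C c) • y := by rw [← map_smul, ← hz', hz]
  have hX : (X - C c : Polynomial L) ≠ 0 := X_sub_C_ne_zero c
  exact smul_right_injective M' hX hcc

theorem stmt10 {q : ℕ} (hq : 1 < q) {L : Type} [Field L]
    (frob : L →+* L) (hfrob : ∀ x : L, frob x = x ^ q) (θ : L)
    {M M' : Type} [AddCommGroup M] [Module (Polynomial L) M]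
    [AddCommGroup M'] [Module (Polynomial L) M']
    [Module L M] [IsScalarTower L (Polynomial L) M]
    [Module L M'] [IsScalarTower L (Polynomial L) M']
    [Module.Finite (Polynomial L) M] [Module.Projective (Polynomial L) M]
    [Module.Finite (Polynomial L) M'] [Module.Projective (Polynomial L) M']
    (τ : M → M) (τ' : M' → M')
    (hτadd : ∀ x y, τ (x + y) = τ x + τ y)
    (hτsl : ∀ (p : Polynomial L) (x : M), τ (p • x) = (p.map frob) • τ x)
    (hτinj : Function.Injective τ)
    (hτ'add : ∀ x y, τ' (x + y) = τ' x + τ' y)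
    (hτ'sl : ∀ (p : Polynomial L) (y : M'), τ' (p • y) = (p.map frob) • τ' y)
    (hτ'inj : Function.Injective τ')
    -- characteristic `c* : A → L`, `t ↦ θ`: the cokernels of `τ, τ'` are
    -- finite dimensional over `L` and annihilated by a power of `J = (t - θ)`
    [FiniteDimensional L (M ⧸ Submodule.span (Polynomial L) (Set.range τ))]
    [FiniteDimensional L (M' ⧸ Submodule.span (Polynomial L) (Set.range τ'))]
    (hJ : ∃ dM : ℕ, ∀ y : M, ((X - C θ) ^ dM : Polynomial L) • y ∈
      Submodule.span (Polynomial L) (Set.range τ))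
    (hJ' : ∃ dM' : ℕ, ∀ y : M', ((X - C θ) ^ dM' : Polynomial L) • y ∈
      Submodule.span (Polynomial L) (Set.range τ'))
    -- the isogeny
    (f : M →ₗ[Polynomial L] M') (hfinj : Function.Injective f)
    (hcompat : ∀ x : M, f (τ x) = τ' (f x))
    (htors : ∃ b : Polynomial L, b ≠ 0 ∧ ∀ y : M', b • y ∈ LinearMap.range f) :
    ∃ a : Polynomial L, a ≠ 0 ∧
      (∀ n : ℕ, frob (a.coeff n) = a.coeff n) ∧
      (∀ y : M', a • y ∈ LinearMap.range f) ∧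
      ∃ g : M' →ₗ[Polynomial L] M,
        Function.Injective g ∧
        (∀ y : M', g (τ' y) = τ (g y)) ∧
        (∀ x : M, g (f x) = a • x) ∧
        (∀ y : M', f (g y) = a • y) ∧
        (∃ c : Polynomial L, c ≠ 0 ∧ ∀ x : M, c • x ∈ LinearMap.range g) := by
  classical
  obtain ⟨dM, hJ⟩ := hJ
  obtain ⟨e, hJ'⟩ := hJ'
  obtain ⟨b0, hb00, hb0ann⟩ := htors
  haveI : NoZeroSMulDivisors (Polynomial L) M' := aux_nzsd ‹_›
  -- Step 0: reduce to finding a good `a`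
  suffices h : ∃ a : Polynomial L, a ≠ 0 ∧ a.map frob = a ∧
      ∀ y : M', a • y ∈ LinearMap.range f by
    obtain ⟨a, ha0, hafix, hann⟩ := h
    refine ⟨a, ha0, ?_, hann, ?_⟩
    · intro n
      conv_rhs => rw [← hafix]
      rw [coeff_map]
    · set φ : M' →ₗ[Polynomial L] M' := a • (LinearMap.id) with hφ
      have hφr : ∀ y, φ y ∈ LinearMap.range f := fun y => hann y
      let ψ : M' →ₗ[Polynomial L] ↥(LinearMap.range f) := φ.codRestrict _ hφr
      let eqv : M ≃ₗ[Polynomial L] ↥(LinearMap.range f) := LinearEquiv.ofInjective f hfinj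
      let g : M' →ₗ[Polynomial L] M := eqv.symm.toLinearMap ∘ₗ ψ
      have hfeq : ∀ w : ↥(LinearMap.range f), f (eqv.symm w) = ↑w := by
        intro w
        have := eqv.apply_symm_apply w
        have h2 : (↑(eqv (eqv.symm w)) : M') = ↑w := by rw [this]
        rwa [LinearEquiv.ofInjective_apply] at h2
      have hfg : ∀ y, f (g y) = a • y := by
        intro y
        show f (eqv.symm (ψ y)) = a • y
        rw [hfeq]
        rfl
      have hgf : ∀ x, g (f x) = a • x := by
        intro x
        apply hfinj
        rw [hfg, map_smul]
      have hginj : Function.Injective g := by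
        intro y1 y2 hy
        have : a • y1 = a • y2 := by rw [← hfg, ← hfg, hy]
        exact smul_right_injective M' ha0 this
      have hgτ : ∀ y, g (τ' y) = τ (g y) := by
        intro y
        apply hfinj
        rw [hfg, hcompat, hfg, hτ'sl, hafix]
      exact ⟨g, hginj, hgτ, hgf, hfg, ⟨a, ha0, fun x => ⟨f x, hgf x⟩⟩⟩
  -- Set up the cokernel N
  set p : Submodule (Polynomial L) M' := LinearMap.range f with hpdef
  set N := M' ⧸ p with hNdef
  set mk : M' →ₗ[Polynomial L] N := p.mkQ with hmkdef
  have mk_surj : Function.Surjective mk := p.mkQ_surjective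
  -- the induced semilinear endomorphism of N
  have hwd : ∀ y y' : M', y - y' ∈ p → mk (τ' y) = mk (τ' y') := by
    intro y y' hyy
    obtain ⟨x, hx⟩ := hyy
    have h2 : τ' y - τ' y' = τ' (y - y') := by
      have := hτ'add (y - y') y'
      rw [sub_add_cancel] at this
      rw [this]; abel
    have h3 : τ' y - τ' y' ∈ p := by
      rw [h2, ← hx, ← hcompat]
      exact ⟨τ x, rfl⟩
    rwa [← sub_eq_zero, ← map_sub, Submodule.mkQ_apply, Submodule.Quotient.mk_eq_zero]
  set τb : N → N := fun n => Quotient.liftOn' n (fun y => mk (τ' y))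
    (fun y y' hyy => hwd y y' ((Submodule.quotientRel_def p).mp hyy)) with hτbdef
  have htb : ∀ y : M', τb (mk y) = mk (τ' y) := fun y => rfl
  have τb_sl : ∀ (pp : Polynomial L) (n : N), τb (pp • n) = (pp.map frob) • τb n := by
    intro pp n
    obtain ⟨y, rfl⟩ := mk_surj n
    rw [← map_smul, htb, htb, hτ'sl, map_smul]
  have τb_zero : τb 0 = 0 := by
    have h0 : (0 : N) = mk 0 := by simp
    rw [h0, htb]
    have : τ' 0 = 0 := by
      have := hτ'add 0 0
      simpa using this
    rw [this]
  -- a monic annihilator of N, of positive degree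
  set b : Polynomial L := (X - C θ) * (b0 * C b0.leadingCoeff⁻¹) with hbdef
  have hbmonic : b.Monic := (monic_X_sub_C θ).mul (monic_mul_leadingCoeff_inv hb00)
  have hbann : ∀ n : N, b • n = 0 := by
    intro n
    obtain ⟨y, rfl⟩ := mk_surj n
    rw [← map_smul, Submodule.mkQ_apply, Submodule.Quotient.mk_eq_zero]
    have h1 : b • y = ((X - C θ) * C b0.leadingCoeff⁻¹) • (b0 • y) := by
      rw [smul_smul, hbdef]; ring_nf
    rw [h1]
    exact Submodule.smul_mem _ _ (hb0ann y)
  have hb0' : b ≠ 0 := hbmonic.ne_zero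
  -- N is finite dimensional over L
  haveI : Module.Finite (Polynomial L) N := Module.Finite.of_surjective mk mk_surj
  haveI hNfd : Module.Finite L N := by
    obtain ⟨s, nvec, hnvec⟩ := Module.Finite.exists_fin (R := Polynomial L) (M := N)
    set D := b.natDegree with hDdef
    set gens : Fin D × Fin s → N := fun jk => ((X : Polynomial L) ^ (jk.1 : ℕ)) • nvec jk.2
      with hgens
    have hsmall : ∀ r : Polynomial L, r.natDegree < D → ∀ k,
        r • nvec k ∈ Submodule.span L (Set.range gens) := by
      intro r hr k
      have hexp := Polynomial.as_sum_range' r D hr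
      rw [hexp]
      rw [Finset.sum_smul]
      apply Submodule.sum_mem
      intro j hj
      have hjD : j < D := Finset.mem_range.mp hj
      rw [← C_mul_X_pow_eq_monomial]
      have : (C (r.coeff j) * X ^ j) • nvec k = r.coeff j • (((X : Polynomial L) ^ j) • nvec k) := by
        rw [mul_smul, ← algebraMap_smul (Polynomial L) (r.coeff j), Polynomial.algebraMap_eq]
      rw [this]
      exact Submodule.smul_mem _ _ (Submodule.subset_span ⟨(⟨j, hjD⟩, k), rfl⟩)
    have hspanL : ∀ n : N, n ∈ Submodule.span L (Set.range gens) := by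
      intro n
      have hn : n ∈ Submodule.span (Polynomial L) (Set.range nvec) := by rw [hnvec]; trivial
      rw [Submodule.mem_span_range_iff_exists_fun] at hn
      obtain ⟨cf, hcf⟩ := hn
      rw [← hcf]
      apply Submodule.sum_mem
      intro k _
      have hsplit : cf k • nvec k = (cf k %ₘ b) • nvec k := by
        conv_lhs => rw [← modByMonic_add_div (cf k) b]
        rw [add_smul, mul_smul, hbann, add_zero]
      rw [hsplit]
      apply hsmall
      have := degree_modByMonic_lt (cf k) hbmonic
      have hD0 : 0 < D := by
        rw [hDdef, hbdef]
        have : ((X - C θ) * (b0 * C b0.leadingCoeff⁻¹)).natDegree =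
            (X - C θ).natDegree + (b0 * C b0.leadingCoeff⁻¹).natDegree :=
          natDegree_mul (X_sub_C_ne_zero θ) (monic_mul_leadingCoeff_inv hb00).ne_zero
        rw [this, natDegree_X_sub_C]
        omega
      by_cases hz : cf k %ₘ b = 0
      · rw [hz]; simpa using hD0
      · exact natDegree_lt_natDegree hz this
    refine ⟨⟨(Finset.univ.image gens), ?_⟩⟩
    rw [Finset.coe_image, Finset.coe_univ, Set.image_univ]
    exact eq_top_iff.mpr fun n _ => hspanL n
  -- the descending chain of spans of images of τb
  set step : Submodule (Polynomial L) N → Submodule (Polynomial L) N :=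
    fun S => Submodule.span (Polynomial L) (τb '' (S : Set N)) with hstepdef
  set W : ℕ → Submodule (Polynomial L) N := fun k => step^[k] ⊤ with hWdef
  have Wzero : W 0 = ⊤ := rfl
  have Wsucc : ∀ k, W (k + 1) = step (W k) := fun k => Function.iterate_succ_apply' step k ⊤
  have Wmono : ∀ k, W (k + 1) ≤ W k := by
    intro k
    induction k with
    | zero => exact le_top
    | succ k ih =>
        rw [Wsucc (k+1)]
        calc step (W (k+1)) ≤ step (W k) :=
              Submodule.span_mono (Set.image_mono (fun x hx => ih hx))
          _ = W (k+1) := (Wsucc k).symm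
  have Wanti : ∀ j k, j ≤ k → W k ≤ W j := by
    intro j k hjk
    induction k with
    | zero => have : j = 0 := Nat.le_zero.mp hjk; rw [this]
    | succ k ih =>
        rcases Nat.lt_or_ge j (k+1) with h | h
        · exact le_trans (Wmono k) (ih (Nat.lt_succ_iff.mp h))
        · have : j = k + 1 := le_antisymm hjk h
          rw [this]
  -- stabilization
  have hstab : ∃ k0, W (k0 + 1) = W k0 := by
    by_contra hcon
    push_neg at hcon
    set fr : ℕ → ℕ := fun k => Module.finrank L (Submodule.restrictScalars L (W k)) with hfr
    have hlt : ∀ k, fr (k+1) < fr k := by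
      intro k
      apply Submodule.finrank_lt_finrank_of_lt
      have hle : Submodule.restrictScalars L (W (k+1)) ≤ Submodule.restrictScalars L (W k) :=
        Wmono k
      refine lt_of_le_of_ne hle ?_
      intro heq
      exact hcon k (Submodule.restrictScalars_injective L _ _ heq)
    have hsum : ∀ k, fr k + k ≤ fr 0 := by
      intro k
      induction k with
      | zero => omega
      | succ k ih => have := hlt k; omega
    have := hsum (fr 0 + 1)
    omega
  obtain ⟨k0, hk0⟩ := hstab
  -- the annihilator ideal of W k0 and its monic generator
  set A : Ideal (Polynomial L) := Submodule.annihilator (W k0) with hAdef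
  have hbA : b ∈ A := Submodule.mem_annihilator.mpr fun n _ => hbann n
  haveI hApr : A.IsPrincipal := IsPrincipalIdealRing.principal A
  set g0 : Polynomial L := Submodule.IsPrincipal.generator A with hg0def
  have hgen : Submodule.span (Polynomial L) {g0} = A :=
    Submodule.IsPrincipal.span_singleton_generator A
  have hg00 : g0 ≠ 0 := by
    intro h
    rw [← hgen] at hbA
    obtain ⟨aa, haa⟩ := Submodule.mem_span_singleton.mp hbA
    rw [h, smul_eq_mul, mul_zero] at haa
    exact hb0' haa.symm
  set m : Polynomial L := g0 * C g0.leadingCoeff⁻¹ with hmdef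
  have hmmonic : m.Monic := monic_mul_leadingCoeff_inv hg00
  have hm0 : m ≠ 0 := hmmonic.ne_zero
  have hmA : m ∈ A := by
    rw [← hgen]
    exact Submodule.mem_span_singleton.mpr ⟨C g0.leadingCoeff⁻¹, by rw [smul_eq_mul, mul_comm]⟩
  have hmkill : ∀ n ∈ W k0, m • n = 0 := Submodule.mem_annihilator.mp hmA
  have hmdvd : ∀ r ∈ A, m ∣ r := by
    intro r hr
    rw [← hgen] at hr
    obtain ⟨aa, haa⟩ := Submodule.mem_span_singleton.mp hr
    have hg0m : g0 ∣ r := ⟨aa, by rw [← haa, smul_eq_mul, mul_comm]⟩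
    refine dvd_trans ?_ hg0m
    refine ⟨C g0.leadingCoeff, ?_⟩
    rw [hmdef, mul_assoc, ← C_mul, inv_mul_cancel₀ (leadingCoeff_ne_zero.mpr hg00), C_1, mul_one]
  -- m is fixed by frob
  have hmfixA : m.map frob ∈ A := by
    rw [Submodule.mem_annihilator]
    intro n hn
    rw [← hk0, Wsucc] at hn
    induction hn using Submodule.span_induction with
    | mem v hv =>
        obtain ⟨n0, hn0, rfl⟩ := hv
        rw [← τb_sl, hmkill n0 hn0, τb_zero]
    | zero => exact smul_zero _
    | add v₁ v₂ _ _ h₁ h₂ => rw [smul_add, h₁, h₂, add_zero]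
    | smul pp v _ hv => rw [smul_comm, hv, smul_zero]
  have hmfix : m.map frob = m := by
    obtain ⟨u, hu⟩ := hmdvd _ hmfixA
    have hdeg : (m.map frob).natDegree = m.natDegree := natDegree_map_eq_of_injective frob.injective m
    have hu0 : u ≠ 0 := by
      intro h
      rw [h, mul_zero] at hu
      exact (hmmonic.map frob).ne_zero hu
    have hdegu : u.natDegree = 0 := by
      have := natDegree_mul hm0 hu0
      rw [← hu, hdeg] at this
      omega
    have hlc : u.leadingCoeff = 1 := by
      have : (m.map frob).leadingCoeff = m.leadingCoeff * u.leadingCoeff := by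
        rw [hu, leadingCoeff_mul]
      rw [(hmmonic.map frob).leadingCoeff, hmmonic.leadingCoeff, one_mul] at this
      exact this.symm
    have h00 : u.coeff 0 = 1 := by
      rw [← hdegu]
      exact hlc
    have : u = 1 := by
      rw [Polynomial.eq_C_of_natDegree_eq_zero hdegu, h00, C_1]
    rw [hu, this, mul_one]
  -- the twisted polynomials
  set π : ℕ → Polynomial L := fun i => X - C (θ ^ q ^ i) with hπdef
  have hπmonic : ∀ i, (π i).Monic := fun i => monic_X_sub_C _
  have hπmap : ∀ i, (π i).map frob = π (i + 1) := by
    intro i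
    have hθ : frob (θ ^ q ^ i) = θ ^ q ^ (i + 1) := by
      rw [hfrob, ← pow_mul, ← pow_succ]
    have h2 : (π i).map frob = X - C (frob (θ ^ q ^ i)) := by
      rw [hπdef]
      simp only [Polynomial.map_sub, Polynomial.map_X, Polynomial.map_C]
    rw [h2, hθ, hπdef]
  set Q : ℕ → Polynomial L := fun k => ∏ i ∈ Finset.range k, π i with hQdef
  have hQmonic : ∀ k, (Q k).Monic := fun k => monic_prod_of_monic _ _ fun i _ => hπmonic i
  have hπ0 : π 0 = X - C θ := by rw [hπdef]; simp
  have hQsucc' : ∀ k, Q (k + 1) = (Q k).map frob * (X - C θ) := by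
    intro k
    have h1 : (Q k).map frob = ∏ i ∈ Finset.range k, π (i + 1) := by
      rw [hQdef]
      rw [Polynomial.map_prod]
      exact Finset.prod_congr rfl fun i _ => hπmap i
    rw [h1, ← hπ0, ← Finset.prod_range_succ']
  -- containment of twisted multiples in the chain
  have hWQ : ∀ k (n : N), ((Q k) ^ e) • n ∈ W k := by
    intro k
    induction k with
    | zero => intro n; rw [Wzero]; trivial
    | succ k ih =>
        intro n
        have hrw : ((Q (k+1)) ^ e) • n = ((Q k) ^ e).map frob • (((X - C θ) ^ e) • n) := by
          rw [hQsucc', Polynomial.map_pow, smul_smul, ← mul_pow]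
        rw [hrw, Wsucc]
        have hbase : ((X - C θ) ^ e) • n ∈
            Submodule.span (Polynomial L) (τb '' ((⊤ : Submodule (Polynomial L) N) : Set N)) := by
          obtain ⟨y, rfl⟩ := mk_surj n
          rw [← map_smul]
          have h1 : mk (((X - C θ) ^ e) • y) ∈
              Submodule.map mk (Submodule.span (Polynomial L) (Set.range τ')) :=
            Submodule.mem_map_of_mem (hJ' y)
          rw [Submodule.map_span] at h1
          refine Submodule.span_mono ?_ h1
          rintro _ ⟨_, ⟨y', rfl⟩, rfl⟩
          exact ⟨mk y', trivial, (htb y').symm⟩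
        revert hbase
        generalize ((X - C θ : Polynomial L) ^ e) • n = w
        intro hbase
        induction hbase using Submodule.span_induction with
        | mem v hv =>
            obtain ⟨n0, _, rfl⟩ := hv
            rw [← τb_sl]
            exact Submodule.subset_span ⟨(Q k ^ e) • n0, ih n0, rfl⟩
        | zero => rw [smul_zero]; exact Submodule.zero_mem _
        | add v₁ v₂ _ _ h₁ h₂ => rw [smul_add]; exact Submodule.add_mem _ h₁ h₂
        | smul pp v _ hv => rw [smul_comm]; exact Submodule.smul_mem _ _ hv
  -- iterates of frobenius
  have hiter : ∀ (j : ℕ) (x : L), frob^[j] x = x ^ q ^ j := by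
    intro j
    induction j with
    | zero => intro x; simp
    | succ j ih =>
        intro x
        rw [Function.iterate_succ_apply, ih, hfrob, ← pow_mul, ← pow_succ']
  by_cases hcase : ∃ n, 1 ≤ n ∧ θ ^ q ^ n = θ
  · -- Case 1 : θ has finite Frobenius orbit
    obtain ⟨nn, hnn1, hnnθ⟩ := hcase
    set k1 := nn * (k0 + 1) with hk1def
    have hk1 : k0 ≤ k1 := by
      have : k0 + 1 ≤ nn * (k0 + 1) := Nat.le_mul_of_pos_left _ (by omega)
      omega
    have hθk1 : θ ^ q ^ k1 = θ := by
      have hm : ∀ s : ℕ, θ ^ q ^ (nn * s) = θ := by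
        intro s
        induction s with
        | zero => simp
        | succ s ih =>
            have h1 : nn * (s + 1) = nn * s + nn := by ring
            rw [h1, pow_add, pow_mul, ih, hnnθ]
      exact hm (k0 + 1)
    have hQQ : (Q k1).map frob = Q k1 := by
      have h1 := hQsucc' k1
      have h2 : Q (k1 + 1) = Q k1 * π k1 := Finset.prod_range_succ _ _
      have h3 : π k1 = X - C θ := by rw [hπdef]; simp only []; rw [hθk1]
      have h4 : (Q k1).map frob * (X - C θ) = Q k1 * (X - C θ) := by
        rw [← h1, h2, h3]
      exact mul_right_cancel₀ (X_sub_C_ne_zero θ) h4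
    refine ⟨m * (Q k1) ^ e, ?_, ?_, ?_⟩
    · exact mul_ne_zero hm0 (pow_ne_zero _ (hQmonic k1).ne_zero)
    · rw [Polynomial.map_mul, Polynomial.map_pow, hmfix, hQQ]
    · intro y
      have h1 : ((Q k1) ^ e) • mk y ∈ W k0 := Wanti k0 k1 hk1 (hWQ k1 (mk y))
      have h2 : (m * (Q k1) ^ e) • mk y = 0 := by
        rw [mul_smul]
        exact hmkill _ h1
      rw [← map_smul, Submodule.mkQ_apply, Submodule.Quotient.mk_eq_zero] at h2
      exact h2
  · -- Case 2 : θ has infinite Frobenius orbit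
    push_neg at hcase
    have hπinj : ∀ i : ℕ, ∀ n : N, π i • n = 0 → n = 0 := by
      intro i
      by_contra hcon
      push_neg at hcon
      obtain ⟨n0, hn0kill, hn00⟩ := hcon
      set ch : ℕ → N := fun k => τb^[k] n0 with hchdef
      have hchsucc : ∀ k, ch (k + 1) = τb (ch k) := fun k =>
        Function.iterate_succ_apply' τb k n0
      have hch : ∀ k, ch k ≠ 0 ∧ (π (i + k)) • ch k = 0 := by
        intro k
        induction k with
        | zero => exact ⟨hn00, by simpa [hchdef] using hn0kill⟩
        | succ k ih =>
            obtain ⟨ihne, ihkill⟩ := ih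
            constructor
            · rw [hchsucc]
              intro h0
              obtain ⟨y, hy⟩ := mk_surj (ch k)
              apply ihne
              rw [← hy, Submodule.mkQ_apply, Submodule.Quotient.mk_eq_zero]
              have hc : frob (θ ^ q ^ (i + k)) ≠ θ := by
                have : frob (θ ^ q ^ (i + k)) = θ ^ q ^ (i + k + 1) := by
                  rw [hfrob, ← pow_mul, ← pow_succ]
                rw [this]
                exact hcase (i + k + 1) (by omega)
              have h1 : (X - C (θ ^ q ^ (i + k))) • y ∈ LinearMap.range f := by
                have := ihkill
                rw [← hy, ← map_smul, Submodule.mkQ_apply, Submodule.Quotient.mk_eq_zero] at this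
                exact this
              have h2 : τ' y ∈ LinearMap.range f := by
                have h3 : τb (mk y) = 0 := by rw [hy]; exact h0
                rw [htb, Submodule.mkQ_apply, Submodule.Quotient.mk_eq_zero] at h3
                exact h3
              exact key frob θ τ τ' hτadd hτsl hτ'sl hJ f hfinj hcompat _ hc y h1 h2
            · rw [hchsucc]
              have h1 : τb (π (i + k) • ch k) = 0 := by rw [ihkill, τb_zero]
              rw [τb_sl, hπmap] at h1
              have h2 : i + k + 1 = i + (k + 1) := by omega
              rwa [h2] at h1
      have haux : ∀ k1 k2 : ℕ, k1 < k2 → θ ^ q ^ (i + k1) = θ ^ q ^ (i + k2) → False := by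
        intro k1 k2 hlt heq
        have h1 : frob^[i + k1] θ = θ ^ q ^ (i + k1) := hiter _ _
        have h2 : frob^[i + k1] (θ ^ q ^ (k2 - k1)) = θ ^ q ^ (i + k2) := by
          rw [hiter, ← pow_mul, ← pow_add]
          congr 2
          omega
        have h3 : frob^[i + k1] (θ ^ q ^ (k2 - k1)) = frob^[i + k1] θ := by
          rw [h2, h1, heq]
        have h4 := (Function.Injective.iterate frob.injective (i + k1)) h3
        exact hcase (k2 - k1) (by omega) h4
      have hdist : Function.Injective (fun k : ℕ => θ ^ q ^ (i + k)) := by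
        intro k1 k2 h
        rcases lt_trichotomy k1 k2 with h' | h' | h'
        · exact absurd h (fun hh => haux k1 k2 h' hh)
        · exact h'
        · exact absurd h.symm (fun hh => haux k2 k1 h' hh)
      have hroot : ∀ k : ℕ, b.IsRoot (θ ^ q ^ (i + k)) := by
        intro k
        obtain ⟨hne, hkill⟩ := hch k
        set lam := θ ^ q ^ (i + k) with hlam
        have hkill' : (X - C lam) • ch k = 0 := hkill
        have hsmash : (C (b.eval lam)) • ch k = 0 := by
          have hdec : b = C (b.eval lam) + (X - C lam) * (b /ₘ (X - C lam)) := by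
            conv_lhs => rw [← modByMonic_add_div b (X - C lam)]
            rw [modByMonic_X_sub_C_eq_C_eval]
          have h0 : b • ch k = 0 := hbann _
          rw [hdec, add_smul, mul_comm, mul_smul, hkill', smul_zero, add_zero] at h0
          exact h0
        show b.eval lam = 0
        by_contra hev
        apply hne
        have h1 : (b.eval lam) • ch k = 0 := by
          rw [← algebraMap_smul (Polynomial L) (b.eval lam) (ch k), Polynomial.algebraMap_eq]
          exact hsmash
        calc ch k = ((b.eval lam)⁻¹ * (b.eval lam)) • ch k := by
              rw [inv_mul_cancel₀ hev, one_smul]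
          _ = (b.eval lam)⁻¹ • ((b.eval lam) • ch k) := mul_smul _ _ _
          _ = 0 := by rw [h1, smul_zero]
      have hinf : {x : L | b.IsRoot x}.Infinite :=
        Set.infinite_of_injective_forall_mem hdist hroot
      exact hb0' (Polynomial.eq_zero_of_infinite_isRoot b hinf)
    have hπsurj : ∀ i : ℕ, Function.Surjective (fun n : N => π i • n) := by
      intro i
      let T : N →ₗ[L] N :=
        { toFun := fun n => π i • n,
          map_add' := fun a b => smul_add _ a b,
          map_smul' := fun c n => by
            simp only [RingHom.id_apply]
            rw [← algebraMap_smul (Polynomial L) c n,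
              ← algebraMap_smul (Polynomial L) c (π i • n), smul_smul, smul_smul, mul_comm] }
      have hTinj : Function.Injective T := by
        intro n1 n2 h12
        have h1 : π i • (n1 - n2) = 0 := by
          rw [smul_sub, sub_eq_zero]
          exact h12
        have := hπinj i _ h1
        rwa [sub_eq_zero] at this
      exact LinearMap.injective_iff_surjective.mp hTinj
    have hmulsurj : ∀ P1 P2 : Polynomial L,
        Function.Surjective (fun n : N => P1 • n) → Function.Surjective (fun n : N => P2 • n) →
        Function.Surjective (fun n : N => (P1 * P2) • n) := by
      intro P1 P2 h1 h2 n
      obtain ⟨n1, hn1⟩ := h1 n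
      obtain ⟨n2, hn2⟩ := h2 n1
      refine ⟨n2, ?_⟩
      show (P1 * P2) • n2 = n
      dsimp only at hn1 hn2
      rw [mul_smul, hn2, hn1]
    have hQsurjk : ∀ k, Function.Surjective (fun n : N => (Q k) • n) := by
      intro k
      induction k with
      | zero =>
          intro n
          exact ⟨n, by simp [hQdef]⟩
      | succ k ih =>
          have h2 : Q (k + 1) = Q k * π k := Finset.prod_range_succ _ _
          intro n
          obtain ⟨u, hu⟩ := hmulsurj _ _ ih (hπsurj k) n
          exact ⟨u, by rw [← h2] at hu; exact hu⟩
    have hpowsurj : ∀ P : Polynomial L, Function.Surjective (fun n : N => P • n) →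
        ∀ j : ℕ, Function.Surjective (fun n : N => (P ^ j) • n) := by
      intro P hP j
      induction j with
      | zero => intro n; exact ⟨n, by simp⟩
      | succ j ihj =>
          intro n
          obtain ⟨u, hu⟩ := hmulsurj _ _ ihj hP n
          refine ⟨u, ?_⟩
          show (P ^ (j + 1)) • u = n
          rw [pow_succ]
          exact hu
    have hQesurj : Function.Surjective (fun n : N => ((Q k0) ^ e) • n) :=
      hpowsurj (Q k0) (hQsurjk k0) e
    refine ⟨m, hm0, hmfix, ?_⟩
    intro y
    obtain ⟨u, hu⟩ := hQesurj (mk y)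
    have h1 : mk y ∈ W k0 := by
      rw [← hu]
      exact hWQ k0 u
    have h2 : m • mk y = 0 := hmkill _ h1
    rw [← map_smul, Submodule.mkQ_apply, Submodule.Quotient.mk_eq_zero] at h2
    exact h2
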